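/- Let Ā be an N×N real symmetric matrix with spectral radius ρ(Ā) < 1, let σ > 0 and α > 0, set C := σ²(I − Ā)^{−α}, and let {1,…,N} = S ⊔ S′ be a partition with both blocks nonempty. Then the cross-block of the covariance satisfies ‖C_{SS′}‖ ≤ σ² α (1 − ρ(Ā))^{−α−1} ‖Ā_{SS′}‖. -/

import Mathlib

open Matrix

noncomputable section

/-- Spectral (operator `2`-) norm of a matrix over `𝕜 = ℝ` or `ℂ`. -/
noncomputable def specNorm {𝕜 : Type*} [RCLike 𝕜] {m n : Type*} [Fintype m] [Fintype n]
    [DecidableEq n] (M : Matrix m n 𝕜) : ℝ :=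
  ‖LinearMap.toContinuousLinearMap (Matrix.toEuclideanLin M)‖

/-- Real power of a real symmetric (positive definite) matrix, defined by the spectral
theorem (functional calculus applied to `fun x => x ^ t`); junk value `0` if not symmetric. -/
noncomputable def mrpow {n : Type*} [Fintype n] [DecidableEq n]
    (X : Matrix n n ℝ) (t : ℝ) : Matrix n n ℝ :=
  if hX : X.IsHermitian then
    (hX.eigenvectorUnitary : Matrix n n ℝ) *
      Matrix.diagonal (fun i => hX.eigenvalues i ^ t) *
      (star (hX.eigenvectorUnitary : Matrix n n ℝ))
  else 0

/-- Spectral radius of a real symmetric matrix (junk value `0` otherwise). -/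
noncomputable def specRad {n : Type*} [Fintype n] [DecidableEq n]
    (A : Matrix n n ℝ) : ℝ :=
  if hA : A.IsHermitian then ⨆ i, |hA.eigenvalues i| else 0

/-- Smallest eigenvalue of a real symmetric matrix (junk value `0` otherwise). -/
noncomputable def lamMin {n : Type*} [Fintype n] [DecidableEq n]
    (A : Matrix n n ℝ) : ℝ :=
  if hA : A.IsHermitian then ⨅ i, hA.eigenvalues i else 0

/-- The submatrix of `M` with rows indexed by `S` and columns indexed by `T`. -/
def subMat {α : Type*} {N : ℕ} (M : Matrix (Fin N) (Fin N) α) (S T : Finset (Fin N)) :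
    Matrix {i // i ∈ S} {j // j ∈ T} α :=
  M.submatrix Subtype.val Subtype.val

/-- Off-diagonal oscillation: the gap between the greatest and the smallest
off-diagonal entries. -/
noncomputable def Osc {n : Type*} (M : Matrix n n ℝ) : ℝ :=
  sSup {x | ∃ i j, i ≠ j ∧ M i j = x} - sInf {x | ∃ i j, i ≠ j ∧ M i j = x}

end


open Filter Topology
open scoped Matrix.Norms.L2Operator

noncomputable section AuxProof


noncomputable def binCoef (α : ℝ) (k : ℕ) : ℝ :=
  (∏ i ∈ Finset.range k, (α + i)) / (k.factorial : ℝ)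

lemma binCoef_zero (α : ℝ) : binCoef α 0 = 1 := by simp [binCoef]

lemma binCoef_pos {α : ℝ} (hα : 0 < α) (k : ℕ) : 0 < binCoef α k := by
  apply div_pos
  · exact Finset.prod_pos fun i _ => by positivity
  · positivity

lemma binCoef_succ (α : ℝ) (k : ℕ) :
    (k + 1 : ℝ) * binCoef α (k + 1) = (α + k) * binCoef α k := by
  have h1 : ((k + 1).factorial : ℝ) = (k + 1) * k.factorial := by
    rw [Nat.factorial_succ]; push_cast; ring
  have h2 : (k.factorial : ℝ) ≠ 0 := by positivity
  have h3 : (k : ℝ) + 1 ≠ 0 := by positivity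
  rw [binCoef, binCoef, Finset.prod_range_succ, h1]
  field_simp

lemma binCoef_shift (α : ℝ) (k : ℕ) :
    (k + 1 : ℝ) * binCoef α (k + 1) = α * binCoef (α + 1) k := by
  have h1 : ((k + 1).factorial : ℝ) = (k + 1) * k.factorial := by
    rw [Nat.factorial_succ]; push_cast; ring
  have h2 : (k.factorial : ℝ) ≠ 0 := by positivity
  have h3 : (k : ℝ) + 1 ≠ 0 := by positivity
  have h4 : ∏ i ∈ Finset.range (k+1), (α + i) = α * ∏ i ∈ Finset.range k, (α + 1 + i) := by
    rw [Finset.prod_range_succ']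
    push_cast
    simp only [add_zero]
    rw [mul_comm]
    congr 1
    apply Finset.prod_congr rfl
    intro i _
    push_cast; ring
  rw [binCoef, binCoef, h4, h1]
  field_simp



lemma binCoef_ratio_tendsto (α : ℝ) {y : ℝ} :
    Tendsto (fun k : ℕ => (α + k) / (k + 1) * |y|) atTop (𝓝 |y|) := by
  have h : Tendsto (fun k : ℕ => (α + k) / (k + 1)) atTop (𝓝 1) := by
    have h0 : Tendsto (fun k : ℕ => (α - 1) / (k + 1) + 1) atTop (𝓝 (0 + 1)) := by
      apply Tendsto.add_const
      have h := (tendsto_const_div_atTop_nhds_zero_nat (α - 1)).comp (tendsto_add_atTop_nat 1)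
      convert h using 2 with k
      simp [Function.comp]
    have heq : ∀ k : ℕ, (α - 1) / (k + 1) + 1 = (α + k) / (k + 1) := by
      intro k
      have : (k : ℝ) + 1 ≠ 0 := by positivity
      field_simp
      ring
    simpa [heq, Function.comp] using h0
  simpa using h.mul_const |y|

lemma binCoef_summable {α : ℝ} (hα : 0 < α) {y : ℝ} (hy : |y| < 1) :
    Summable (fun k => binCoef α k * y ^ k) := by
  set r : ℝ := (|y| + 1) / 2 with hr
  have hyr : |y| < r := by rw [hr]; linarith
  have hr1 : r < 1 := by rw [hr]; linarith
  apply summable_of_ratio_norm_eventually_le hr1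
  filter_upwards [(binCoef_ratio_tendsto α (y := y)).eventually_lt_const hyr] with k hk
  have hb := binCoef_pos hα k
  have hb1 := binCoef_pos hα (k + 1)
  have hrec := binCoef_succ α k
  have hk1 : (0:ℝ) < (k:ℝ) + 1 := by positivity
  have hbc : binCoef α (k + 1) = (α + k) / (k + 1) * binCoef α k := by
    field_simp
    linarith [hrec]
  rw [norm_mul, norm_mul, Real.norm_eq_abs, Real.norm_eq_abs, Real.norm_eq_abs,
    Real.norm_eq_abs, abs_of_pos hb, abs_of_pos hb1, hbc, pow_succ, abs_mul, abs_pow]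
  have hak : 0 < α + k := by positivity
  have h1 : (α + k) / (k + 1) * binCoef α k * (|y| ^ k * |y|)
      = ((α + k) / (k+1) * |y|) * (binCoef α k * |y| ^ k) := by ring
  rw [h1]
  apply mul_le_mul_of_nonneg_right (le_of_lt hk)
  positivity

noncomputable def binG (α : ℝ) (y : ℝ) : ℝ := ∑' k, binCoef α k * y ^ k
noncomputable def binG' (α : ℝ) (y : ℝ) : ℝ := ∑' k, binCoef α (k+1) * (k+1) * y ^ k

lemma binG'_summable {α : ℝ} (hα : 0 < α) {y : ℝ} (hy : |y| < 1) :
    Summable (fun k => binCoef α (k+1) * (k+1) * y ^ k) := by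
  have h := (binCoef_summable (by linarith : (0:ℝ) < α + 1) hy).mul_left α
  apply h.congr
  intro k
  linear_combination -y ^ k * (binCoef_shift α k)

lemma binG_hasDerivAt {α : ℝ} (hα : 0 < α) {y : ℝ} (hy : |y| < 1) :
    HasDerivAt (binG α) (binG' α y) y := by
  set r : ℝ := (|y| + 1) / 2 with hrdef
  have hyr : |y| < r := by rw [hrdef]; linarith [abs_nonneg y]
  have hr0 : 0 < r := by rw [hrdef]; positivity
  have hr1 : r < 1 := by rw [hrdef]; linarith
  have hrabs : |r| < 1 := by rw [abs_of_pos hr0]; exact hr1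
  set t : Set ℝ := Metric.ball (0:ℝ) r with htdef
  have hmem : ∀ z : ℝ, z ∈ t ↔ |z| < r := by
    intro z; rw [htdef, Metric.mem_ball, Real.dist_eq, sub_zero]
  have hu : Summable (fun n => binCoef α (n+1) * (n+1) * r ^ n) :=
    binG'_summable hα hrabs
  have key : HasDerivAt (fun z => ∑' n, binCoef α (n+1) * z ^ (n+1))
      (∑' n, binCoef α (n+1) * ((n+1) * y ^ n)) y := by
    apply hasDerivAt_tsum_of_isPreconnected hu Metric.isOpen_ball
      (convex_ball (0:ℝ) r).isPreconnected
      (g := fun n z => binCoef α (n+1) * z ^ (n+1))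
      (g' := fun n z => binCoef α (n+1) * ((n+1) * z ^ n))
      (y₀ := 0) ?_ ?_ ?_ ?_ ((hmem y).2 hyr)
    · intro n z _
      have h := (hasDerivAt_pow (n+1) z).const_mul (binCoef α (n+1))
      simpa using h
    · intro n z hz
      rw [hmem] at hz
      have hb := (binCoef_pos hα (n+1)).le
      rw [Real.norm_eq_abs, abs_mul, abs_mul, abs_pow, abs_of_nonneg hb,
        abs_of_nonneg (by positivity : (0:ℝ) ≤ ((n:ℝ)+1))]
      have : |z| ^ n ≤ r ^ n := pow_le_pow_left₀ (abs_nonneg z) hz.le n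
      calc binCoef α (n+1) * (((n:ℝ)+1) * |z| ^ n)
          ≤ binCoef α (n+1) * (((n:ℝ)+1) * r ^ n) := by
            apply mul_le_mul_of_nonneg_left _ hb
            apply mul_le_mul_of_nonneg_left this (by positivity)
        _ = binCoef α (n+1) * (n+1) * r ^ n := by push_cast; ring
    · rw [hmem]; simpa using hr0
    · apply Summable.congr summable_zero
      intro n; simp
  have heq : binG α =ᶠ[nhds y] fun z => binCoef α 0 + ∑' n, binCoef α (n+1) * z ^ (n+1) := by
    filter_upwards [Metric.isOpen_ball.mem_nhds ((Metric.mem_ball).2 (by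
      rw [Real.dist_eq, sub_zero]; exact hy))] with z hz
    rw [Metric.mem_ball, Real.dist_eq, sub_zero] at hz
    rw [binG, Summable.tsum_eq_zero_add (binCoef_summable hα hz)]
    simp
  have : HasDerivAt (fun z => binCoef α 0 + ∑' n, binCoef α (n+1) * z ^ (n+1))
      (∑' n, binCoef α (n+1) * ((n+1) * y ^ n)) y := key.const_add _
  have hfinal := this.congr_of_eventuallyEq heq
  refine HasDerivAt.congr_deriv hfinal ?_
  rw [binG']
  apply tsum_congr
  intro k; push_cast; ring

lemma binG_ode {α : ℝ} (hα : 0 < α) {y : ℝ} (hy : |y| < 1) :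
    (1 - y) * binG' α y = α * binG α y := by
  have hg : HasSum (fun k => binCoef α k * y ^ k) (binG α y) :=
    (binCoef_summable hα hy).hasSum
  have hG : HasSum (fun k => binCoef α (k+1) * (k+1) * y ^ k) (binG' α y) :=
    (binG'_summable hα hy).hasSum
  have h1 : HasSum (fun k : ℕ => (α + k) * (binCoef α k * y ^ k)) (binG' α y) := by
    have hfun : (fun k : ℕ => (α + k) * (binCoef α k * y ^ k))
        = (fun k : ℕ => binCoef α (k+1) * (k+1) * y ^ k) := by
      funext k
      linear_combination -y ^ k * (binCoef_succ α k)
    rw [hfun]; exact hG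
  have h2 := hg.mul_left α
  have h3 : HasSum (fun k : ℕ => (k : ℝ) * (binCoef α k * y ^ k))
      (binG' α y - α * binG α y) := by
    have h := h1.sub h2
    have hfun : (fun k : ℕ => (k : ℝ) * (binCoef α k * y ^ k))
        = fun k : ℕ => (α + k) * (binCoef α k * y ^ k) - α * (binCoef α k * y ^ k) := by
      funext k; ring
    rw [hfun]; exact h
  have h4 : HasSum (fun k : ℕ => ((k+1 : ℕ) : ℝ) * (binCoef α (k+1) * y ^ (k+1)))
      (y * binG' α y) := by
    have h := hG.mul_left y
    have hfun : (fun k : ℕ => ((k+1 : ℕ) : ℝ) * (binCoef α (k+1) * y ^ (k+1)))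
        = fun k : ℕ => y * (binCoef α (k+1) * (k+1) * y ^ k) := by
      funext k; push_cast; ring
    rw [hfun]; exact h
  have h5 : HasSum (fun k : ℕ => (k : ℝ) * (binCoef α k * y ^ k))
      (y * binG' α y) := by
    have := (hasSum_nat_add_iff (f := fun k : ℕ => (k : ℝ) * (binCoef α k * y ^ k)) 1).mp h4
    simpa using this
  have := h3.unique h5
  linarith

lemma binF_hasDerivAt {α : ℝ} (hα : 0 < α) {y : ℝ} (hy : |y| < 1) :
    HasDerivAt (fun z => binG α z * (1 - z) ^ α) 0 y := by
  have hy1 : 0 < 1 - y := by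
    have := abs_lt.mp hy
    linarith [this.2]
  have hgd := binG_hasDerivAt hα hy
  have hsub : HasDerivAt (fun z : ℝ => 1 - z) (-1) y := by
    simpa using (hasDerivAt_id y).const_sub 1
  have hrp : HasDerivAt (fun z : ℝ => (1 - z) ^ α) (α * (1 - y) ^ (α - 1) * (-1)) y := by
    have h := (Real.hasDerivAt_rpow_const (p := α) (Or.inl (ne_of_gt hy1))).comp y hsub
    simpa [Function.comp_def] using h
  have hprod := hgd.mul hrp
  have hode := binG_ode hα hy
  have hzero : binG' α y * (1 - y) ^ α + binG α y * (α * (1 - y) ^ (α - 1) * (-1)) = 0 := by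
    rw [Real.rpow_sub hy1, Real.rpow_one]
    have hne : (1 - y) ≠ 0 := ne_of_gt hy1
    field_simp
    linear_combination (1 - y) ^ α * hode
  rw [← hzero]
  exact hprod

theorem binomial_hasSum {α : ℝ} (hα : 0 < α) {x : ℝ} (hx : |x| < 1) :
    HasSum (fun k => binCoef α k * x ^ k) ((1 - x) ^ (-α) : ℝ) := by
  have h1x : 0 < 1 - x := by
    have := abs_lt.mp hx; linarith [this.2]
  -- F is constant on the interval between 0 and x
  have habs : ∀ z y : ℝ, |y| < 1 → z ∈ Set.Icc (min 0 y) (max 0 y) → |z| < 1 := by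
    intro z y hy hz
    obtain ⟨h1, h2⟩ := hz
    have := abs_lt.mp hy
    rcases le_or_gt 0 y with h | h
    · rw [min_eq_left h, max_eq_right h] at *
      rw [abs_lt]; constructor <;> nlinarith [this.1, this.2]
    · rw [min_eq_right h.le, max_eq_left h.le] at *
      rw [abs_lt]; constructor <;> nlinarith [this.1, this.2]
  have hconst : binG α x * (1 - x) ^ α = binG α 0 * (1 - 0) ^ α := by
    rcases le_or_gt 0 x with h | h
    · have := constant_of_has_deriv_right_zero
        (f := fun z => binG α z * (1 - z) ^ α) (a := 0) (b := x)
        (fun z hz => (binF_hasDerivAt hα (habs z x hx (by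
          rwa [min_eq_left h, max_eq_right h]))).continuousAt.continuousWithinAt)
        (fun z hz => (binF_hasDerivAt hα (habs z x hx (by
          rw [min_eq_left h, max_eq_right h]; exact ⟨hz.1, hz.2.le⟩))).hasDerivWithinAt)
      exact this x (Set.right_mem_Icc.mpr h)
    · have := constant_of_has_deriv_right_zero
        (f := fun z => binG α z * (1 - z) ^ α) (a := x) (b := 0)
        (fun z hz => (binF_hasDerivAt hα (habs z x hx (by
          rwa [min_eq_right h.le, max_eq_left h.le]))).continuousAt.continuousWithinAt)
        (fun z hz => (binF_hasDerivAt hα (habs z x hx (by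
          rw [min_eq_right h.le, max_eq_left h.le]; exact ⟨hz.1, hz.2.le⟩))).hasDerivWithinAt)
      exact (this 0 (Set.right_mem_Icc.mpr h.le)).symm
  have hG0 : binG α 0 = 1 := by
    rw [binG, tsum_eq_single 0 (fun k hk => by simp [zero_pow hk])]
    simp [binCoef_zero]
  rw [hG0, sub_zero, Real.one_rpow, one_mul] at hconst
  have hval : binG α x = (1 - x) ^ (-α) := by
    rw [Real.rpow_neg h1x.le]
    have hne : (1 - x) ^ α ≠ 0 := ne_of_gt (Real.rpow_pos_of_pos h1x α)
    field_simp
    linarith [hconst]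
  rw [← hval]
  exact (binCoef_summable hα hx).hasSum



lemma specNorm_eq_norm {m n : Type*} [Fintype m] [Fintype n] [DecidableEq n]
    (M : Matrix m n ℝ) : specNorm M = ‖M‖ := rfl

-- squared euclidean norm
lemma euclid_sq {ι : Type*} [Fintype ι] (x : EuclideanSpace ℝ ι) :
    ‖x‖ ^ 2 = ∑ i, x i ^ 2 := by
  rw [EuclideanSpace.norm_eq, Real.sq_sqrt (by positivity)]
  simp [Real.norm_eq_abs, sq_abs]

lemma opnorm_via_sq {m n : Type*} [Fintype m] [Fintype n] [DecidableEq n]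
    (M : Matrix m n ℝ) {c : ℝ} (hc : 0 ≤ c)
    (h : ∀ v : EuclideanSpace ℝ n,
      ∑ i, ((M *ᵥ (v : n → ℝ)) i) ^ 2 ≤ c ^ 2 * ‖v‖ ^ 2) : ‖M‖ ≤ c := by
  rw [Matrix.l2_opNorm_def]
  apply ContinuousLinearMap.opNorm_le_bound _ hc
  intro v
  have h2 : ‖(LinearMap.toContinuousLinearMap (Matrix.toEuclideanLin M)) v‖ ^ 2
      ≤ (c * ‖v‖) ^ 2 := by
    have hv := h v
    have : ((LinearMap.toContinuousLinearMap (Matrix.toEuclideanLin M)) v : EuclideanSpace ℝ m)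
        = (WithLp.equiv 2 (m → ℝ)).symm (M *ᵥ (WithLp.equiv 2 (n → ℝ) v)) := by
      simp [Matrix.toEuclideanLin_apply]
    rw [this, euclid_sq]
    calc ∑ i, ((WithLp.equiv 2 (m → ℝ)).symm (M *ᵥ (WithLp.equiv 2 (n → ℝ) v)) i) ^ 2
        = ∑ i, ((M *ᵥ (v : n → ℝ)) i) ^ 2 := by rfl
      _ ≤ c ^ 2 * ‖v‖ ^ 2 := hv
      _ = (c * ‖v‖) ^ 2 := by ring
  have := Real.sqrt_le_sqrt h2
  rwa [Real.sqrt_sq (norm_nonneg _), Real.sqrt_sq (by positivity)] at this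

lemma mulVec_sq_le {m n : Type*} [Fintype m] [Fintype n] [DecidableEq n]
    (M : Matrix m n ℝ) (w : n → ℝ) :
    ∑ i, ((M *ᵥ w) i) ^ 2 ≤ ‖M‖ ^ 2 * ∑ j, (w j) ^ 2 := by
  have h := M.l2_opNorm_mulVec ((WithLp.equiv 2 (n → ℝ)).symm w)
  have h2 := pow_le_pow_left₀ (norm_nonneg _) h 2
  rw [euclid_sq] at h2
  calc ∑ i, ((M *ᵥ w) i) ^ 2
      = ∑ i, (((EuclideanSpace.equiv m ℝ).symm
          (M *ᵥ ((WithLp.equiv 2 (n → ℝ)).symm w : n → ℝ))) i) ^ 2 := by rfl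
    _ ≤ (‖M‖ * ‖(WithLp.equiv 2 (n → ℝ)).symm w‖) ^ 2 := h2
    _ = ‖M‖ ^ 2 * ‖(WithLp.equiv 2 (n → ℝ)).symm w‖ ^ 2 := by ring
    _ = ‖M‖ ^ 2 * ∑ j, (w j) ^ 2 := by rw [euclid_sq]; rfl


lemma sum_coe_finset {N : ℕ} (T : Finset (Fin N)) (f : Fin N → ℝ) :
    ∑ j : {j // j ∈ T}, f j.val = ∑ j ∈ T, f j := by
  rw [← Finset.sum_coe_sort T f]

lemma subMat_norm_le {N : ℕ} (M : Matrix (Fin N) (Fin N) ℝ) (S T : Finset (Fin N)) :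
    ‖subMat M S T‖ ≤ ‖M‖ := by
  apply opnorm_via_sq _ (norm_nonneg M)
  intro v
  set w : Fin N → ℝ := fun j => if h : j ∈ T then v ⟨j, h⟩ else 0 with hw
  have hmv : ∀ i : {i // i ∈ S}, (subMat M S T *ᵥ (v : {j // j ∈ T} → ℝ)) i
      = (M *ᵥ w) i.val := by
    intro i
    show ∑ j : {j // j ∈ T}, M i.val j.val * v j = ∑ j : Fin N, M i.val j * w j
    rw [← Finset.sum_subset (Finset.subset_univ T) (fun j _ hj => by
      rw [hw]; simp [dif_neg hj])]
    rw [← sum_coe_finset T (fun j => M i.val j * w j)]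
    apply Finset.sum_congr rfl
    intro j _
    congr 1
    rw [hw]
    simp [dif_pos j.2]
  have hsq : ∑ i : {i // i ∈ S}, ((subMat M S T *ᵥ (v : {j // j ∈ T} → ℝ)) i) ^ 2
      ≤ ∑ i : Fin N, ((M *ᵥ w) i) ^ 2 := by
    simp_rw [hmv]
    rw [sum_coe_finset S (fun i => ((M *ᵥ w) i) ^ 2)]
    apply Finset.sum_le_sum_of_subset_of_nonneg (Finset.subset_univ S)
    intro i _ _; positivity
  have hw2 : ∑ j : Fin N, (w j) ^ 2 = ‖v‖ ^ 2 := by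
    rw [euclid_sq]
    rw [← Finset.sum_subset (Finset.subset_univ T) (fun j _ hj => by
      rw [hw]; simp [dif_neg hj])]
    rw [← sum_coe_finset T (fun j => (w j)^2)]
    apply Finset.sum_congr rfl
    intro j _
    congr 1
    rw [hw]
    simp [dif_pos j.2]
  calc ∑ i : {i // i ∈ S}, ((subMat M S T *ᵥ (v : {j // j ∈ T} → ℝ)) i) ^ 2
      ≤ ∑ i : Fin N, ((M *ᵥ w) i) ^ 2 := hsq
    _ ≤ ‖M‖ ^ 2 * ∑ j, (w j) ^ 2 := mulVec_sq_le M w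
    _ = ‖M‖ ^ 2 * ‖v‖ ^ 2 := by rw [hw2]

lemma blockNorm {N : ℕ} (M : Matrix (Fin N) (Fin N) ℝ) (S T₁ T₂ : Finset (Fin N))
    (hd : Disjoint T₁ T₂)
    (h1 : ∀ i, i ∈ S → ∀ j, j ∉ T₁ → M i j = 0)
    (h2 : ∀ i, i ∉ S → ∀ j, j ∉ T₂ → M i j = 0) :
    ‖M‖ ≤ max ‖subMat M S T₁‖ ‖subMat M Sᶜ T₂‖ := by
  set c := max ‖subMat M S T₁‖ ‖subMat M Sᶜ T₂‖ with hc
  have hc0 : 0 ≤ c := le_trans (norm_nonneg _) (le_max_left _ _)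
  apply opnorm_via_sq _ hc0
  intro v
  set w : Fin N → ℝ := (v : Fin N → ℝ) with hwdef
  have key : ∀ (U T : Finset (Fin N)), (∀ i, i ∈ U → ∀ j, j ∉ T → M i j = 0) →
      ∑ i ∈ U, ((M *ᵥ w) i) ^ 2 ≤ ‖subMat M U T‖ ^ 2 * ∑ j ∈ T, (w j) ^ 2 := by
    intro U T hz
    have hmv : ∀ i : {i // i ∈ U},
        (M *ᵥ w) i.val = (subMat M U T *ᵥ (fun j : {j // j ∈ T} => w j.val)) i := by
      intro i
      show ∑ j : Fin N, M i.val j * w j = ∑ j : {j // j ∈ T}, M i.val j.val * w j.val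
      rw [sum_coe_finset T (fun j => M i.val j * w j)]
      rw [← Finset.sum_subset (Finset.subset_univ T) (fun j _ hj => by
        rw [hz i.val i.2 j hj]; ring)]
    calc ∑ i ∈ U, ((M *ᵥ w) i) ^ 2
        = ∑ i : {i // i ∈ U}, ((M *ᵥ w) i.val) ^ 2 :=
          (sum_coe_finset U (fun i => ((M *ᵥ w) i) ^ 2)).symm
      _ = ∑ i : {i // i ∈ U}, ((subMat M U T *ᵥ (fun j : {j // j ∈ T} => w j.val)) i) ^ 2 := by
          simp_rw [hmv]
      _ ≤ ‖subMat M U T‖ ^ 2 * ∑ j : {j // j ∈ T}, (w j.val) ^ 2 :=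
          mulVec_sq_le (subMat M U T) _
      _ = ‖subMat M U T‖ ^ 2 * ∑ j ∈ T, (w j) ^ 2 := by
          rw [sum_coe_finset T (fun j => (w j)^2)]
  have k1 := key S T₁ h1
  have k2 := key Sᶜ T₂ (fun i hi => h2 i (Finset.mem_compl.mp hi))
  have hsplit : ∑ i : Fin N, ((M *ᵥ w) i) ^ 2
      = ∑ i ∈ S, ((M *ᵥ w) i) ^ 2 + ∑ i ∈ Sᶜ, ((M *ᵥ w) i) ^ 2 :=
    (Finset.sum_add_sum_compl S _).symm
  have hb1 : ‖subMat M S T₁‖ ^ 2 ≤ c ^ 2 :=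
    pow_le_pow_left₀ (norm_nonneg _) (le_max_left _ _) 2
  have hb2 : ‖subMat M Sᶜ T₂‖ ^ 2 ≤ c ^ 2 :=
    pow_le_pow_left₀ (norm_nonneg _) (le_max_right _ _) 2
  have hT : ∑ j ∈ T₁, (w j) ^ 2 + ∑ j ∈ T₂, (w j) ^ 2 ≤ ‖v‖ ^ 2 := by
    rw [euclid_sq]
    rw [← Finset.sum_union hd]
    apply Finset.sum_le_sum_of_subset_of_nonneg (Finset.subset_univ _)
    intro i _ _; positivity
  have hs1 : (0:ℝ) ≤ ∑ j ∈ T₁, (w j) ^ 2 := Finset.sum_nonneg fun _ _ => by positivity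
  have hs2 : (0:ℝ) ≤ ∑ j ∈ T₂, (w j) ^ 2 := Finset.sum_nonneg fun _ _ => by positivity
  calc ∑ i : Fin N, ((M *ᵥ w) i) ^ 2
      = ∑ i ∈ S, ((M *ᵥ w) i) ^ 2 + ∑ i ∈ Sᶜ, ((M *ᵥ w) i) ^ 2 := hsplit
    _ ≤ ‖subMat M S T₁‖ ^ 2 * ∑ j ∈ T₁, (w j) ^ 2
        + ‖subMat M Sᶜ T₂‖ ^ 2 * ∑ j ∈ T₂, (w j) ^ 2 := add_le_add k1 k2
    _ ≤ c ^ 2 * ∑ j ∈ T₁, (w j) ^ 2 + c ^ 2 * ∑ j ∈ T₂, (w j) ^ 2 :=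
        add_le_add (mul_le_mul_of_nonneg_right hb1 hs1) (mul_le_mul_of_nonneg_right hb2 hs2)
    _ = c ^ 2 * (∑ j ∈ T₁, (w j) ^ 2 + ∑ j ∈ T₂, (w j) ^ 2) := by ring
    _ ≤ c ^ 2 * ‖v‖ ^ 2 := mul_le_mul_of_nonneg_left hT (by positivity)


lemma l2opnorm_transpose {m n : Type*} [Fintype m] [Fintype n] [DecidableEq n] [DecidableEq m]
    (M : Matrix m n ℝ) : ‖Mᵀ‖ = ‖M‖ := by
  have : Mᵀ = Mᴴ := by
    ext i j; simp [Matrix.conjTranspose_apply]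
  rw [this, Matrix.l2_opNorm_conjTranspose]

lemma norm_one_le {n : Type*} [Fintype n] [DecidableEq n] :
    ‖(1 : Matrix n n ℝ)‖ ≤ 1 := by
  have h : ‖(1 : Matrix n n ℝ)‖ * ‖(1 : Matrix n n ℝ)‖ = ‖(1 : Matrix n n ℝ)‖ := by
    have := Matrix.l2_opNorm_conjTranspose_mul_self (1 : Matrix n n ℝ)
    simpa using this.symm
  nlinarith [norm_nonneg (1 : Matrix n n ℝ)]

lemma norm_unitary_le {n : Type*} [Fintype n] [DecidableEq n]
    (U : Matrix n n ℝ) (hU : Uᴴ * U = 1) : ‖U‖ ≤ 1 := by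
  have h : ‖U‖ * ‖U‖ = ‖(1 : Matrix n n ℝ)‖ := by
    rw [← hU]; exact (Matrix.l2_opNorm_conjTranspose_mul_self U).symm
  nlinarith [norm_nonneg U, norm_one_le (n := n), norm_nonneg (1 : Matrix n n ℝ)]

lemma norm_diagonal_le {n : Type*} [Fintype n] [DecidableEq n]
    (d : n → ℝ) {r : ℝ} (hr : 0 ≤ r) (hd : ∀ i, |d i| ≤ r) :
    ‖Matrix.diagonal d‖ ≤ r := by
  apply opnorm_via_sq _ hr
  intro v
  rw [euclid_sq]
  rw [Finset.mul_sum]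
  apply Finset.sum_le_sum
  intro i _
  have : (Matrix.diagonal d *ᵥ (v : n → ℝ)) i = d i * v i := by
    simp [Matrix.mulVec_diagonal]
  rw [this, mul_pow]
  have h1 : (d i) ^ 2 ≤ r ^ 2 := by
    rw [← sq_abs]
    exact pow_le_pow_left₀ (abs_nonneg _) (hd i) 2
  nlinarith [sq_nonneg (v i)]

lemma conj_norm_le {n : Type*} [Fintype n] [DecidableEq n]
    (V M : Matrix n n ℝ) (hV : Vᴴ * V = 1) (hV' : V * Vᴴ = 1) :
    ‖V * M * star V‖ ≤ ‖M‖ := by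
  calc ‖V * M * star V‖ ≤ ‖V * M‖ * ‖star V‖ := Matrix.l2_opNorm_mul _ _
    _ ≤ ‖V‖ * ‖M‖ * ‖star V‖ := by
        apply mul_le_mul_of_nonneg_right (Matrix.l2_opNorm_mul _ _) (norm_nonneg _)
    _ ≤ 1 * ‖M‖ * 1 := by
        apply mul_le_mul
        · apply mul_le_mul_of_nonneg_right (norm_unitary_le V hV) (norm_nonneg M)
        · exact norm_unitary_le Vᴴ (by simpa using hV')
        · exact norm_nonneg _
        · positivity
    _ = ‖M‖ := by ring

lemma herm_norm_le_specRad {N : ℕ} [NeZero N] {A : Matrix (Fin N) (Fin N) ℝ}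
    (hA : A.IsHermitian) : ‖A‖ ≤ specRad A := by
  have hsp := hA.spectral_theorem
  have hrad : specRad A = ⨆ i, |hA.eigenvalues i| := dif_pos hA
  have hb : ∀ i, |hA.eigenvalues i| ≤ specRad A := by
    intro i
    rw [hrad]
    exact le_ciSup (f := fun i => |hA.eigenvalues i|) (Set.Finite.bddAbove (Set.finite_range _)) i
  have hr0 : 0 ≤ specRad A :=
    le_trans (abs_nonneg _) (hb (Classical.arbitrary (Fin N)))
  set V : Matrix (Fin N) (Fin N) ℝ := (hA.eigenvectorUnitary : Matrix (Fin N) (Fin N) ℝ)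
    with hVdef
  have hV1 : Vᴴ * V = 1 := by
    rw [← Matrix.star_eq_conjTranspose]
    exact Matrix.mem_unitaryGroup_iff'.mp hA.eigenvectorUnitary.2
  have hV2 : V * Vᴴ = 1 := by
    rw [← Matrix.star_eq_conjTranspose]
    exact Matrix.mem_unitaryGroup_iff.mp hA.eigenvectorUnitary.2
  have hdiag : Matrix.diagonal (RCLike.ofReal ∘ hA.eigenvalues) = Matrix.diagonal hA.eigenvalues := by
    rfl
  calc ‖A‖ = ‖V * Matrix.diagonal hA.eigenvalues * star V‖ := by
        rw [← hdiag]; exact congrArg _ hsp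
    _ ≤ ‖Matrix.diagonal hA.eigenvalues‖ := conj_norm_le _ _ hV1 hV2
    _ ≤ specRad A := norm_diagonal_le _ hr0 hb




lemma eigen_abs_le {n : Type*} [Fintype n] [DecidableEq n] {M : Matrix n n ℝ}
    (hM : M.IsHermitian) (i : n) : |hM.eigenvalues i| ≤ ‖M‖ := by
  set v := hM.eigenvectorBasis i with hv
  have hmv := hM.mulVec_eigenvectorBasis i
  have hnv : ‖v‖ = 1 := hM.eigenvectorBasis.orthonormal.1 i
  have h1 : ((EuclideanSpace.equiv n ℝ).symm (M *ᵥ ⇑v) : EuclideanSpace ℝ n)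
      = hM.eigenvalues i • v := by
    rw [hmv]; rfl
  have h2 := M.l2_opNorm_mulVec v
  have h3 : ‖(hM.eigenvalues i • v : EuclideanSpace ℝ n)‖ ≤ ‖M‖ * ‖v‖ := by
    rw [← h1]; exact h2
  rw [norm_smul, hnv, Real.norm_eq_abs, mul_one, mul_one] at h3
  exact h3

theorem hasSum_mrpow {N : ℕ} {M : Matrix (Fin N) (Fin N) ℝ}
    (hM : M.IsHermitian) (hn : ‖M‖ < 1) {α : ℝ} (hα : 0 < α) :
    HasSum (fun k => binCoef α k • M ^ k) (mrpow (1 - M) (-α)) := by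
  have hB : (1 - M).IsHermitian := Matrix.isHermitian_one.sub hM
  set β := hB.eigenvalues with hβ
  set V : Matrix (Fin N) (Fin N) ℝ := (hB.eigenvectorUnitary : Matrix (Fin N) (Fin N) ℝ)
    with hVdef
  have hV1 : star V * V = 1 := Matrix.mem_unitaryGroup_iff'.mp hB.eigenvectorUnitary.2
  have hV2 : V * star V = 1 := Matrix.mem_unitaryGroup_iff.mp hB.eigenvectorUnitary.2
  have hsp : 1 - M = V * Matrix.diagonal β * star V := by
    have h := hB.spectral_theorem
    have hdiag : Matrix.diagonal (RCLike.ofReal ∘ β) = Matrix.diagonal β := by rfl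
    rw [← hdiag]; exact h
  -- eigenvalue bounds
  have heig : ∀ i, |1 - β i| ≤ ‖M‖ := by
    intro i
    set v := hB.eigenvectorBasis i with hv
    have hmv := hB.mulVec_eigenvectorBasis i
    have hnv : ‖v‖ = 1 := hB.eigenvectorBasis.orthonormal.1 i
    have hMv : M *ᵥ (WithLp.equiv 2 (Fin N → ℝ)) v
        = (1 - β i) • ((WithLp.equiv 2 (Fin N → ℝ)) v) := by
      have h1 : (1 - M) *ᵥ (WithLp.equiv 2 (Fin N → ℝ)) v
          = (WithLp.equiv 2 (Fin N → ℝ)) v - M *ᵥ (WithLp.equiv 2 (Fin N → ℝ)) v := by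
        rw [Matrix.sub_mulVec, Matrix.one_mulVec]
      have h2 : (WithLp.equiv 2 (Fin N → ℝ)) v - M *ᵥ (WithLp.equiv 2 (Fin N → ℝ)) v
          = β i • (WithLp.equiv 2 (Fin N → ℝ)) v := by rw [← h1]; exact hmv
      have h3 : M *ᵥ (WithLp.equiv 2 (Fin N → ℝ)) v
          = (WithLp.equiv 2 (Fin N → ℝ)) v - β i • (WithLp.equiv 2 (Fin N → ℝ)) v := by
        rw [← h2]; abel
      rw [h3, sub_smul, one_smul]
    have h1 : ((EuclideanSpace.equiv (Fin N) ℝ).symm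
        (M *ᵥ (WithLp.equiv 2 (Fin N → ℝ)) v) : EuclideanSpace ℝ (Fin N))
        = (1 - β i) • v := by
      rw [hMv]; rfl
    have h2 := M.l2_opNorm_mulVec v
    have h3 : ‖((1 - β i) • v : EuclideanSpace ℝ (Fin N))‖ ≤ ‖M‖ * ‖v‖ := by
      rw [← h1]; exact h2
    rw [norm_smul, hnv, Real.norm_eq_abs, mul_one, mul_one] at h3
    exact h3
  have hxabs : ∀ i, |1 - β i| < 1 := fun i => lt_of_le_of_lt (heig i) hn
  -- M as conjugated diagonal
  have hM_eq : M = V * Matrix.diagonal (fun i => 1 - β i) * star V := by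
    have h : Matrix.diagonal (fun i => 1 - β i) = 1 - Matrix.diagonal β := by
      ext i j
      by_cases hij : i = j <;> simp [Matrix.diagonal_apply, hij, Matrix.one_apply]
    rw [h, Matrix.mul_sub, Matrix.mul_one, Matrix.sub_mul, hV2, ← hsp]
    simp
  have hpow : ∀ k, M ^ k = V * Matrix.diagonal (fun i => (1 - β i) ^ k) * star V := by
    intro k
    induction k with
    | zero =>
      simp only [pow_zero]
      rw [Matrix.diagonal_one, Matrix.mul_one, hV2]
    | succ k ih =>
      rw [pow_succ, ih, hM_eq]
      have hassoc : (V * Matrix.diagonal (fun i => (1 - β i) ^ k) * star V) *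
          (V * Matrix.diagonal (fun i => 1 - β i) * star V)
          = V * (Matrix.diagonal (fun i => (1 - β i) ^ k) * (star V * V) *
              Matrix.diagonal (fun i => 1 - β i)) * star V := by
        noncomm_ring
      rw [hassoc, hV1, mul_one, Matrix.diagonal_mul_diagonal]
      have hp : (fun i => (1 - β i) ^ k * (1 - β i)) = fun i => (1 - β i) ^ (k + 1) := by
        funext i; rw [pow_succ]
      rw [hp]
  -- scalar series on eigenvalues
  have hscal : ∀ i, HasSum (fun k => binCoef α k * (1 - β i) ^ k) (β i ^ (-α)) := by
    intro i
    have h := binomial_hasSum hα (hxabs i)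
    simpa [sub_sub_cancel] using h
  have hpi : HasSum (fun k => fun i => binCoef α k * (1 - β i) ^ k)
      (fun i => β i ^ (-α)) := Pi.hasSum.mpr hscal
  -- conjugation linear map
  set L : (Fin N → ℝ) →ₗ[ℝ] Matrix (Fin N) (Fin N) ℝ :=
    { toFun := fun d => V * Matrix.diagonal d * star V
      map_add' := fun d e => by
        have : Matrix.diagonal (d + e) = Matrix.diagonal d + Matrix.diagonal e := by
          rw [Matrix.diagonal_add]; rfl
        simp only [this, Matrix.mul_add, Matrix.add_mul]
      map_smul' := fun c d => by
        simp only [RingHom.id_apply, Matrix.diagonal_smul, Matrix.mul_smul,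
          Matrix.smul_mul] } with hL
  have hLcont : Continuous L := L.continuous_of_finiteDimensional
  have hmap := hpi.map L.toAddMonoidHom hLcont
  have hterm : (L.toAddMonoidHom ∘ fun k => fun i => binCoef α k * (1 - β i) ^ k)
      = fun k => binCoef α k • M ^ k := by
    funext k
    show L (fun i => binCoef α k * (1 - β i) ^ k) = binCoef α k • M ^ k
    have h1 : (fun i => binCoef α k * (1 - β i) ^ k)
        = binCoef α k • (fun i => (1 - β i) ^ k) := rfl
    rw [h1, L.map_smul, hpow k]
    rfl
  have htarget : L.toAddMonoidHom (fun i => β i ^ (-α)) = mrpow (1 - M) (-α) := by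
    show V * Matrix.diagonal (fun i => β i ^ (-α)) * star V = mrpow (1 - M) (-α)
    rw [mrpow, dif_pos hB]
  rw [hterm, htarget] at hmap
  exact hmap


lemma pow_norm_le {n : Type*} [Fintype n] [DecidableEq n] {D : Matrix n n ℝ} {ρ : ℝ}
    (hD : ‖D‖ ≤ ρ) : ∀ k : ℕ, ‖D ^ (k+1)‖ ≤ ρ ^ (k+1) := by
  intro k
  induction k with
  | zero => simpa using hD
  | succ k ih =>
    calc ‖D ^ (k+2)‖ = ‖D ^ (k+1) * D‖ := by rw [← pow_succ]
      _ ≤ ‖D ^ (k+1)‖ * ‖D‖ := Matrix.l2_opNorm_mul _ _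
      _ ≤ ρ ^ (k+1) * ρ := by
          apply mul_le_mul ih hD (norm_nonneg _) (le_trans (norm_nonneg _) (by
            calc ‖D^(k+1)‖ ≤ ρ^(k+1) := ih))
      _ = ρ ^ (k+2) := by rw [← pow_succ]

lemma pow_sub_norm_le {n : Type*} [Fintype n] [DecidableEq n]
    {A D : Matrix n n ℝ} {ρ : ℝ} (hρ0 : 0 ≤ ρ) (hA : ‖A‖ ≤ ρ) (hD : ‖D‖ ≤ ρ) :
    ∀ k : ℕ, ‖A ^ (k+1) - D ^ (k+1)‖ ≤ (k+1) * ρ ^ k * ‖A - D‖ := by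
  intro k
  induction k with
  | zero => simp
  | succ k ih =>
    have hsplit : A ^ (k+2) - D ^ (k+2)
        = A * (A ^ (k+1) - D ^ (k+1)) + (A - D) * D ^ (k+1) := by
      have h1 : A * A ^ (k+1) = A ^ (k+2) := (pow_succ' A (k+1)).symm
      have h2 : D * D ^ (k+1) = D ^ (k+2) := (pow_succ' D (k+1)).symm
      rw [mul_sub, sub_mul, h1, h2]
      abel
    have hDk := pow_norm_le hD k
    have hnF : (0:ℝ) ≤ ‖A - D‖ := norm_nonneg _
    have hρk : (0:ℝ) ≤ ρ ^ k := by positivity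
    calc ‖A ^ (k+2) - D ^ (k+2)‖
        ≤ ‖A * (A ^ (k+1) - D ^ (k+1))‖ + ‖(A - D) * D ^ (k+1)‖ := by
          rw [hsplit]; exact norm_add_le _ _
      _ ≤ ‖A‖ * ‖A ^ (k+1) - D ^ (k+1)‖ + ‖A - D‖ * ‖D ^ (k+1)‖ :=
          add_le_add (Matrix.l2_opNorm_mul _ _) (Matrix.l2_opNorm_mul _ _)
      _ ≤ ρ * ((k+1) * ρ ^ k * ‖A - D‖) + ‖A - D‖ * ρ ^ (k+1) := by
          apply add_le_add
          · apply mul_le_mul hA ih (norm_nonneg _) hρ0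
          · exact mul_le_mul_of_nonneg_left hDk hnF
      _ = ((k+1:ℕ)+1) * ρ ^ (k+1) * ‖A - D‖ := by
          push_cast
          rw [pow_succ]
          ring

theorem statement4 {N : ℕ}
    (A : Matrix (Fin N) (Fin N) ℝ) (hA : A.IsHermitian) (hρ : specRad A < 1)
    (σ α : ℝ) (hσ : 0 < σ) (hα : 0 < α)
    (C : Matrix (Fin N) (Fin N) ℝ) (hC : C = σ ^ 2 • mrpow (1 - A) (-α))
    (S : Finset (Fin N)) (hS : S.Nonempty) (hS' : Sᶜ.Nonempty) :
    specNorm (subMat C S Sᶜ) ≤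
      σ ^ 2 * α * (1 - specRad A) ^ (-α - 1) * specNorm (subMat A S Sᶜ) := by
  classical
  obtain ⟨s0, hs0⟩ := hS
  haveI : Nonempty (Fin N) := ⟨s0⟩
  haveI : NeZero N := ⟨Nat.pos_iff_ne_zero.mp s0.pos⟩
  have hrad : specRad A = ⨆ i, |hA.eigenvalues i| := dif_pos hA
  have hρ0 : 0 ≤ specRad A := by
    rw [hrad]
    exact le_trans (abs_nonneg _)
      (le_ciSup (f := fun i => |hA.eigenvalues i|)
        (Set.Finite.bddAbove (Set.finite_range _)) s0)
  set ρ := specRad A with hρdef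
  have hnA : ‖A‖ ≤ ρ := herm_norm_le_specRad hA
  have hnA1 : ‖A‖ < 1 := lt_of_le_of_lt hnA hρ
  have hAsymm : ∀ i j, A i j = A j i := by
    intro i j
    have h := hA.apply i j
    simpa using h.symm
  -- block diagonal part D
  set D : Matrix (Fin N) (Fin N) ℝ :=
    Matrix.of (fun i j => if (i ∈ S ↔ j ∈ S) then A i j else 0) with hDdef
  have hDapp : ∀ i j, D i j = if (i ∈ S ↔ j ∈ S) then A i j else 0 := fun i j => rfl
  have hDH : D.IsHermitian := by
    show Dᴴ = D
    ext i j
    rw [Matrix.conjTranspose_apply, hDapp, hDapp]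
    by_cases h : i ∈ S ↔ j ∈ S
    · rw [if_pos (by tauto), if_pos h]
      simp [hAsymm i j]
    · rw [if_neg (by tauto), if_neg h]
      simp
  have hDn : ‖D‖ ≤ ρ := by
    have hb := blockNorm D S S Sᶜ disjoint_compl_right
      (fun i hi j hj => by rw [hDapp]; exact if_neg (by tauto))
      (fun i hi j hj => by
        rw [hDapp]
        exact if_neg (by
          have : j ∈ S := by
            by_contra hjS
            exact hj (Finset.mem_compl.mpr hjS)
          tauto))
    have e1 : subMat D S S = subMat A S S := by
      ext i j
      show D i.val j.val = A i.val j.val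
      rw [hDapp, if_pos (iff_of_true i.2 j.2)]
    have e2 : subMat D Sᶜ Sᶜ = subMat A Sᶜ Sᶜ := by
      ext i j
      show D i.val j.val = A i.val j.val
      rw [hDapp, if_pos (iff_of_false (Finset.mem_compl.mp i.2) (Finset.mem_compl.mp j.2))]
    rw [e1, e2] at hb
    calc ‖D‖ ≤ max ‖subMat A S S‖ ‖subMat A Sᶜ Sᶜ‖ := hb
      _ ≤ ‖A‖ := max_le (subMat_norm_le A S S) (subMat_norm_le A Sᶜ Sᶜ)
      _ ≤ ρ := hnA
  have hDn1 : ‖D‖ < 1 := lt_of_le_of_lt hDn hρ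
  -- ‖A - D‖ ≤ ‖subMat A S Sᶜ‖
  have hFn : ‖A - D‖ ≤ ‖subMat A S Sᶜ‖ := by
    have hb := blockNorm (A - D) S Sᶜ S disjoint_compl_left
      (fun i hi j hj => by
        have hjS : j ∈ S := by
          by_contra hjS
          exact hj (Finset.mem_compl.mpr hjS)
        show A i j - D i j = 0
        rw [hDapp, if_pos (iff_of_true hi hjS), sub_self])
      (fun i hi j hj => by
        show A i j - D i j = 0
        rw [hDapp, if_pos (iff_of_false hi hj), sub_self])
    have e1 : subMat (A - D) S Sᶜ = subMat A S Sᶜ := by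
      ext i j
      show A i.val j.val - D i.val j.val = A i.val j.val
      rw [hDapp, if_neg (by
        have := i.2
        have := Finset.mem_compl.mp j.2
        tauto), sub_zero]
    have e2 : subMat (A - D) Sᶜ S = (subMat A S Sᶜ)ᵀ := by
      ext i j
      show A i.val j.val - D i.val j.val = A j.val i.val
      rw [hDapp, if_neg (by
        have := Finset.mem_compl.mp i.2
        have := j.2
        tauto), sub_zero]
      exact hAsymm i.val j.val
    rw [e1, e2, l2opnorm_transpose, max_self] at hb
    exact hb
  -- series representations
  have hsA := hasSum_mrpow hA hnA1 hα
  have hsD := hasSum_mrpow hDH hDn1 hα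
  set E : Matrix (Fin N) (Fin N) ℝ := mrpow (1 - A) (-α) - mrpow (1 - D) (-α) with hEdef
  have hsE : HasSum (fun k => binCoef α k • (A ^ k - D ^ k)) E := by
    have h := hsA.sub hsD
    have hfun : (fun k => binCoef α k • (A ^ k - D ^ k))
        = fun k => binCoef α k • A ^ k - binCoef α k • D ^ k := by
      funext k; rw [smul_sub]
    rw [hfun]; exact h
  have hsE' : HasSum (fun k => binCoef α (k+1) • (A ^ (k+1) - D ^ (k+1))) E := by
    have h := (hasSum_nat_add_iff
      (f := fun k => binCoef α k • (A ^ k - D ^ k)) 1).mpr (by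
        have h0 : E + ∑ i ∈ Finset.range 1, binCoef α i • (A ^ i - D ^ i) = E := by
          simp
        rw [h0]; exact hsE)
    exact h
  -- norm bound on E
  have hρabs : |ρ| < 1 := by rwa [abs_of_nonneg hρ0]
  have hα1 : (0:ℝ) < α + 1 := by linarith
  have hu : HasSum (fun k => (α * ‖A - D‖) * (binCoef (α+1) k * ρ ^ k))
      ((α * ‖A - D‖) * ((1 - ρ) ^ (-(α+1)) : ℝ)) :=
    (binomial_hasSum hα1 hρabs).mul_left _
  have hub : ∀ k, ‖binCoef α (k+1) • (A ^ (k+1) - D ^ (k+1))‖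
      ≤ (α * ‖A - D‖) * (binCoef (α+1) k * ρ ^ k) := by
    intro k
    have hbc := (binCoef_pos hα (k+1)).le
    rw [norm_smul, Real.norm_eq_abs, abs_of_nonneg hbc]
    calc binCoef α (k+1) * ‖A ^ (k+1) - D ^ (k+1)‖
        ≤ binCoef α (k+1) * ((k+1) * ρ ^ k * ‖A - D‖) :=
          mul_le_mul_of_nonneg_left (pow_sub_norm_le hρ0 hnA hDn k) hbc
      _ = (α * ‖A - D‖) * (binCoef (α+1) k * ρ ^ k) := by
          have h := binCoef_shift α k
          linear_combination (ρ ^ k * ‖A - D‖) * h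
  have hsummN : Summable (fun k => ‖binCoef α (k+1) • (A ^ (k+1) - D ^ (k+1))‖) :=
    Summable.of_nonneg_of_le (fun k => norm_nonneg _) hub hu.summable
  have hEn : ‖E‖ ≤ (α * ‖A - D‖) * ((1 - ρ) ^ (-(α+1)) : ℝ) := by
    calc ‖E‖ = ‖∑' k, binCoef α (k+1) • (A ^ (k+1) - D ^ (k+1))‖ := by
          rw [hsE'.tsum_eq]
      _ ≤ ∑' k, ‖binCoef α (k+1) • (A ^ (k+1) - D ^ (k+1))‖ :=
          norm_tsum_le_tsum_norm hsummN
      _ ≤ ∑' k, (α * ‖A - D‖) * (binCoef (α+1) k * ρ ^ k) :=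
          Summable.tsum_le_tsum hub hsummN hu.summable
      _ = (α * ‖A - D‖) * ((1 - ρ) ^ (-(α+1)) : ℝ) := hu.tsum_eq
  -- cross block of mrpow (1 - D) vanishes
  have hDpow : ∀ k i j, ¬(i ∈ S ↔ j ∈ S) → (D ^ k) i j = 0 := by
    intro k
    induction k with
    | zero =>
      intro i j hij
      have : i ≠ j := by rintro rfl; exact hij Iff.rfl
      simp [Matrix.one_apply, this]
    | succ k ih =>
      intro i j hij
      rw [pow_succ, Matrix.mul_apply]
      apply Finset.sum_eq_zero
      intro l _
      by_cases h1 : i ∈ S ↔ l ∈ S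
      · have h2 : ¬(l ∈ S ↔ j ∈ S) := by tauto
        rw [hDapp, if_neg h2, mul_zero]
      · rw [ih i l h1, zero_mul]
  have hmrD : ∀ (i j : Fin N), i ∈ S → j ∉ S → (mrpow (1 - D) (-α)) i j = 0 := by
    intro i j hi hj
    set e : Matrix (Fin N) (Fin N) ℝ →ₗ[ℝ] ℝ :=
      { toFun := fun X => X i j
        map_add' := fun X Y => rfl
        map_smul' := fun c X => rfl } with hedef
    have hecont : Continuous e := e.continuous_of_finiteDimensional
    have hmap := hsD.map e.toAddMonoidHom hecont
    have hterm : (e.toAddMonoidHom ∘ fun k => binCoef α k • D ^ k) = fun _ => (0:ℝ) := by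
      funext k
      show binCoef α k • (D ^ k) i j = 0
      rw [hDpow k i j (by tauto), smul_zero]
    rw [hterm] at hmap
    exact (hasSum_zero.unique hmap).symm
  -- put everything together
  have hsub : subMat C S Sᶜ = σ ^ 2 • subMat E S Sᶜ := by
    ext i j
    show C i.val j.val = σ ^ 2 * E i.val j.val
    rw [hC, hEdef]
    have hj : j.val ∉ S := Finset.mem_compl.mp j.2
    show σ ^ 2 * (mrpow (1 - A) (-α)) i.val j.val
        = σ ^ 2 * ((mrpow (1 - A) (-α)) i.val j.val - (mrpow (1 - D) (-α)) i.val j.val)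
    rw [hmrD i.val j.val i.2 hj, sub_zero]
  have hrw1 : specNorm (subMat C S Sᶜ) = σ ^ 2 * ‖subMat E S Sᶜ‖ := by
    rw [specNorm_eq_norm, hsub, norm_smul, Real.norm_eq_abs, abs_of_nonneg (by positivity)]
  have hrw2 : specNorm (subMat A S Sᶜ) = ‖subMat A S Sᶜ‖ := specNorm_eq_norm _
  have hexp : ((1 - ρ) ^ (-(α+1)) : ℝ) = ((1 - ρ) ^ (-α-1) : ℝ) := by
    have h : (-(α+1) : ℝ) = -α - 1 := by ring
    rw [h]
  have hrpow0 : (0:ℝ) ≤ ((1 - ρ) ^ (-α-1) : ℝ) := Real.rpow_nonneg (by linarith) _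
  rw [hrw1, hrw2]
  calc σ ^ 2 * ‖subMat E S Sᶜ‖
      ≤ σ ^ 2 * ‖E‖ := by
        apply mul_le_mul_of_nonneg_left (subMat_norm_le E S Sᶜ) (by positivity)
    _ ≤ σ ^ 2 * ((α * ‖A - D‖) * ((1 - ρ) ^ (-α-1) : ℝ)) := by
        apply mul_le_mul_of_nonneg_left _ (by positivity)
        rw [← hexp]
        exact hEn
    _ ≤ σ ^ 2 * ((α * ‖subMat A S Sᶜ‖) * ((1 - ρ) ^ (-α-1) : ℝ)) := by
        apply mul_le_mul_of_nonneg_left _ (by positivity)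
        apply mul_le_mul_of_nonneg_right _ hrpow0
        exact mul_le_mul_of_nonneg_left hFn hα.le
    _ = σ ^ 2 * α * (1 - ρ) ^ (-α-1) * ‖subMat A S Sᶜ‖ := by ring

end AuxProof
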